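/- Let d be a positive integer. The group O(A)/{±id}, where A is the discriminant group of the lattice ⟨-2d⟩ ⊕ U⊕U ⊕ E8(-1)⊕E8(-1) (so A ≅ Z/2d with quadratic form q(x) = -x²/2d mod 2Z), is an elementary abelian 2-group of order 2^{p(d)-1}, where p(1)=1 and p(d) is the number of distinct primes dividing d for d ≥ 2. -/

import Mathlib

open ZMod

/-- 2-torsion subgroup. -/
def torsion2 (G : Type*) [CommGroup G] : Subgroup G where
  carrier := {a | a * a = 1}
  one_mem' := one_mul 1
  mul_mem' := by
    intro a b ha hb
    simp only [Set.mem_setOf_eq] at *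
    rw [mul_mul_mul_comm, ha, hb, one_mul]
  inv_mem' := by
    intro a ha
    simp only [Set.mem_setOf_eq] at *
    rw [← mul_inv, ha, inv_one]

lemma mem_torsion2 {G : Type*} [CommGroup G] (a : G) : a ∈ torsion2 G ↔ a * a = 1 := Iff.rfl

/-- units with u*u=1 correspond to ring elements with a*a=1 -/
def torsion2Equiv (R : Type*) [CommRing R] :
    torsion2 Rˣ ≃ {a : R // a * a = 1} where
  toFun ζ := ⟨((ζ : Rˣ) : R), by
    have h := ζ.2
    rw [mem_torsion2] at h
    have := congrArg Units.val h
    simpa using this⟩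
  invFun a := ⟨Units.mkOfMulEqOne a.1 a.1 a.2, by
    rw [mem_torsion2]; ext; simp [a.2]⟩
  left_inv ζ := by ext; rfl
  right_inv a := rfl

noncomputable def Pc (n : ℕ) : ℕ := Nat.card {a : ZMod n // a * a = 1}

lemma card_torsion2 (n : ℕ) : Nat.card (torsion2 (ZMod n)ˣ) = Pc n :=
  Nat.card_congr (torsion2Equiv (ZMod n))

lemma card_subtype_pair {α : Type*} {x y : α} (h : x ≠ y) :
    Nat.card {a : α // a = x ∨ a = y} = 2 := by
  have e : {a : α // a = x ∨ a = y} ≃ ↥({x, y} : Set α) :=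
    Equiv.subtypeEquivRight (fun a => by simp)
  rw [Nat.card_congr e, Nat.card_coe_set_eq, Set.ncard_pair h]

lemma card_subtype_quad {α : Type*} {x y z w : α} (h1 : x ≠ y) (h2 : x ≠ z) (h3 : x ≠ w)
    (h4 : y ≠ z) (h5 : y ≠ w) (h6 : z ≠ w) :
    Nat.card {a : α // a = x ∨ a = y ∨ a = z ∨ a = w} = 4 := by
  have e : {a : α // a = x ∨ a = y ∨ a = z ∨ a = w} ≃ ↥({x, y, z, w} : Set α) :=
    Equiv.subtypeEquivRight (fun a => by simp)
  rw [Nat.card_congr e, Nat.card_coe_set_eq]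
  rw [Set.ncard_insert_of_notMem (by simp [h1, h2, h3]) (Set.toFinite _),
    Set.ncard_insert_of_notMem (by simp [h4, h5]) (Set.toFinite _), Set.ncard_pair h6]

lemma Pc_mul {m n : ℕ} (h : Nat.Coprime m n) : Pc (m * n) = Pc m * Pc n := by
  have e1 : {a : ZMod (m*n) // a * a = 1} ≃ {x : ZMod m × ZMod n // x * x = 1} :=
    (ZMod.chineseRemainder h).toEquiv.subtypeEquiv (fun a => by
      constructor
      · intro ha
        show (ZMod.chineseRemainder h) a * (ZMod.chineseRemainder h) a = 1
        rw [← map_mul, ha, map_one]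
      · intro ha
        apply (ZMod.chineseRemainder h).injective
        rw [map_mul, map_one]
        exact ha)
  have e2 : {x : ZMod m × ZMod n // x * x = 1} ≃
      {a : ZMod m // a * a = 1} × {b : ZMod n // b * b = 1} :=
    (Equiv.subtypeEquivRight (q := fun x : ZMod m × ZMod n => x.1 * x.1 = 1 ∧ x.2 * x.2 = 1)
      (fun x => by rw [Prod.ext_iff]; rfl)).trans
      (Equiv.subtypeProdEquivProd (p := fun a : ZMod m => a*a=1) (q := fun b : ZMod n => b*b=1))
  rw [Pc, Nat.card_congr (e1.trans e2), Nat.card_prod]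
  rfl

lemma zmod_eq_intCast_iff (n : ℕ) [NeZero n] (a : ZMod n) (c : ℤ) :
    a = (c : ZMod n) ↔ (n : ℤ) ∣ (ZMod.cast a : ℤ) - c := by
  conv_lhs => rw [← ZMod.intCast_zmod_cast a]
  rw [ZMod.intCast_eq_intCast_iff, Int.modEq_iff_dvd, dvd_sub_comm]

lemma mul_self_eq_one_iff_int (n : ℕ) [NeZero n] (a : ZMod n) :
    a * a = 1 ↔ (n : ℤ) ∣ ((ZMod.cast a : ℤ) * (ZMod.cast a : ℤ) - 1) := by
  have h1 : a * a = ((((ZMod.cast a : ℤ) * (ZMod.cast a : ℤ)) : ℤ) : ZMod n) := by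
    push_cast [ZMod.intCast_zmod_cast]; ring
  constructor
  · intro h
    have : (((ZMod.cast a : ℤ) * (ZMod.cast a : ℤ) : ℤ) : ZMod n) = ((1 : ℤ) : ZMod n) := by
      rw [← h1, h]; norm_num
    rw [ZMod.intCast_eq_intCast_iff, Int.modEq_iff_dvd, dvd_sub_comm] at this
    simpa using this
  · intro h
    rw [h1]
    have : (((ZMod.cast a : ℤ) * (ZMod.cast a : ℤ) : ℤ) : ZMod n) = ((1 : ℤ) : ZMod n) := by
      rw [ZMod.intCast_eq_intCast_iff, Int.modEq_iff_dvd, dvd_sub_comm]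
      simpa using h
    simpa using this

lemma one_ne_neg_one (n : ℕ) [NeZero n] (h3 : 3 ≤ n) : (1 : ZMod n) ≠ -1 := by
  intro h
  have h2 : ((2 : ℕ) : ZMod n) = 0 := by
    push_cast
    linear_combination h
  rw [ZMod.natCast_eq_zero_iff] at h2
  have := Nat.le_of_dvd (by norm_num) h2
  omega

lemma sq_eq_one_odd_pp {p k : ℕ} (hp : p.Prime) (hp2 : p ≠ 2) (hk : k ≠ 0)
    (a : ZMod (p ^ k)) : a * a = 1 ↔ a = 1 ∨ a = -1 := by
  haveI : NeZero (p ^ k) := ⟨pow_ne_zero _ hp.pos.ne'⟩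
  have hpZ : Prime ((p : ℕ) : ℤ) := Nat.prime_iff_prime_int.mp hp
  constructor
  · intro h
    rw [mul_self_eq_one_iff_int] at h
    set z : ℤ := (ZMod.cast a : ℤ) with hz
    have hfac : z * z - 1 = (z - 1) * (z + 1) := by ring
    have hdvd : ((p : ℤ)) ^ k ∣ (z - 1) * (z + 1) := by
      rw [← hfac]; exact_mod_cast h
    by_cases hd : ((p : ℤ)) ∣ z - 1
    · left
      have hnd : ¬ ((p : ℤ)) ∣ z + 1 := by
        intro h2
        have : ((p : ℤ)) ∣ 2 := by
          have := dvd_sub h2 hd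
          simpa using this
        have hpd : p ∣ 2 := by exact_mod_cast this
        exact hp2 ((Nat.prime_dvd_prime_iff_eq hp Nat.prime_two).mp hpd)
      have hcop : IsCoprime (((p : ℤ)) ^ k) (z + 1) :=
        (hpZ.coprime_iff_not_dvd.mpr hnd).pow_left
      have : ((p : ℤ)) ^ k ∣ z - 1 := hcop.dvd_of_dvd_mul_right hdvd
      rw [show (1 : ZMod (p ^ k)) = ((1 : ℤ) : ZMod (p ^ k)) by norm_num,
        zmod_eq_intCast_iff]
      push_cast
      exact this
    · right
      have hcop : IsCoprime (((p : ℤ)) ^ k) (z - 1) :=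
        (hpZ.coprime_iff_not_dvd.mpr hd).pow_left
      have : ((p : ℤ)) ^ k ∣ z + 1 := hcop.dvd_of_dvd_mul_left hdvd
      rw [show (-1 : ZMod (p ^ k)) = ((-1 : ℤ) : ZMod (p ^ k)) by norm_num,
        zmod_eq_intCast_iff]
      push_cast
      convert this using 1
      rw [← hz]; ring
  · rintro (rfl | rfl) <;> norm_num

lemma Pc_odd_pp {p k : ℕ} (hp : p.Prime) (hp2 : p ≠ 2) (hk : k ≠ 0) : Pc (p ^ k) = 2 := by
  haveI : NeZero (p ^ k) := ⟨pow_ne_zero _ hp.pos.ne'⟩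
  rw [Pc, Nat.card_congr (Equiv.subtypeEquivRight (fun a => sq_eq_one_odd_pp hp hp2 hk a))]
  refine card_subtype_pair (one_ne_neg_one _ ?_)
  have h3 : 3 ≤ p := by
    rcases hp.two_le.lt_or_eq with h | h
    · omega
    · omega
  calc 3 ≤ p := h3
    _ ≤ p ^ k := Nat.le_self_pow hk p

lemma intCast_ne_intCast (n : ℕ) [NeZero n] {c c' : ℤ} (h1 : 0 < c' - c) (h2 : c' - c < n) :
    (c : ZMod n) ≠ (c' : ZMod n) := by
  intro h
  rw [ZMod.intCast_eq_intCast_iff, Int.modEq_iff_dvd] at h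
  have := Int.le_of_dvd h1 h
  omega

lemma sq_eq_one_two_pp {k : ℕ} (hk : 3 ≤ k) (a : ZMod (2 ^ k)) :
    a * a = 1 ↔ a = 1 ∨ a = -1 ∨ a = ((2 ^ (k - 1) + 1 : ℤ) : ZMod (2 ^ k)) ∨
      a = ((2 ^ (k - 1) - 1 : ℤ) : ZMod (2 ^ k)) := by
  obtain ⟨j, rfl⟩ : ∃ j, k = j + 3 := ⟨k - 3, by omega⟩
  haveI : NeZero (2 ^ (j + 3)) := ⟨pow_ne_zero _ two_ne_zero⟩
  have hk1 : j + 3 - 1 = j + 2 := rfl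
  rw [hk1]
  have hgen : ∀ c : ℤ, (a = (c : ZMod (2 ^ (j + 3))) ↔
      (2 : ℤ) ^ (j + 3) ∣ (ZMod.cast a : ℤ) - c) := by
    intro c
    rw [zmod_eq_intCast_iff]
    push_cast
    rfl
  constructor
  · intro h
    rw [mul_self_eq_one_iff_int] at h
    set z : ℤ := (ZMod.cast a : ℤ) with hz
    have h' : (2 : ℤ) ^ (j + 3) ∣ z * z - 1 := by exact_mod_cast h
    obtain ⟨t, ht⟩ := h'
    have hodd : Odd z := by
      have : Odd (z * z) := ⟨2 ^ (j + 2) * t, by rw [show z * z = 2 ^ (j + 3) * t + 1 by omega]; ring⟩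
      exact (Int.odd_mul.mp this).1
    obtain ⟨y, hy⟩ := hodd
    have h' : 4 * 2 ^ (j + 1) ∣ 4 * (y * (y + 1)) := by
      rw [show (4 : ℤ) * 2 ^ (j + 1) = 2 ^ (j + 3) by ring,
        show (4 : ℤ) * (y * (y + 1)) = z * z - 1 by rw [hy]; ring]
      exact ⟨t, ht⟩
    have h2 : (2 : ℤ) ^ (j + 1) ∣ y * (y + 1) :=
      (mul_dvd_mul_iff_left (by norm_num : (4 : ℤ) ≠ 0)).mp h'
    have hp2 : Prime (2 : ℤ) := Int.prime_two
    have key : (2 : ℤ) ^ (j + 2) ∣ z - 1 ∨ (2 : ℤ) ^ (j + 2) ∣ z + 1 := by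
      rcases Int.even_or_odd y with hev | hod
      · left
        have hnd : ¬ (2 : ℤ) ∣ y + 1 := by
          obtain ⟨m, hm⟩ := hev
          omega
        have hcop : IsCoprime ((2 : ℤ) ^ (j + 1)) (y + 1) :=
          (hp2.coprime_iff_not_dvd.mpr hnd).pow_left
        obtain ⟨u, hu⟩ := hcop.dvd_of_dvd_mul_right h2
        exact ⟨u, by rw [hy, hu]; ring⟩
      · right
        have hnd : ¬ (2 : ℤ) ∣ y := by
          obtain ⟨m, hm⟩ := hod
          omega
        have hcop : IsCoprime ((2 : ℤ) ^ (j + 1)) y :=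
          (hp2.coprime_iff_not_dvd.mpr hnd).pow_left
        obtain ⟨u, hu⟩ := hcop.dvd_of_dvd_mul_left h2
        exact ⟨u, by rw [hy, show y = 2 ^ (j + 1) * u - 1 by omega]; ring⟩
    rcases key with ⟨w, hw⟩ | ⟨w, hw⟩
    · rcases Int.even_or_odd w with ⟨u, hu⟩ | ⟨u, hu⟩
      · left
        rw [show (1 : ZMod (2 ^ (j + 3))) = ((1 : ℤ) : ZMod (2 ^ (j + 3))) by norm_num, hgen]
        exact ⟨u, by rw [hw, hu]; ring⟩
      · right; right; left
        rw [hgen]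
        exact ⟨u, by rw [show z - (2 ^ (j + 2) + 1) = z - 1 - 2 ^ (j + 2) by ring, hw, hu]; ring⟩
    · rcases Int.even_or_odd w with ⟨u, hu⟩ | ⟨u, hu⟩
      · right; left
        rw [show (-1 : ZMod (2 ^ (j + 3))) = ((-1 : ℤ) : ZMod (2 ^ (j + 3))) by norm_num, hgen]
        exact ⟨u, by rw [show z - (-1) = z + 1 by ring, hw, hu]; ring⟩
      · right; right; right
        rw [hgen]
        exact ⟨u, by rw [show z - (2 ^ (j + 2) - 1) = z + 1 - 2 ^ (j + 2) by ring, hw, hu]; ring⟩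
  · intro h
    have hmul : ∀ c : ℤ, a = (c : ZMod (2 ^ (j + 3))) →
        a * a = ((c * c : ℤ) : ZMod (2 ^ (j + 3))) := by
      intro c hc
      rw [hc]
      push_cast
      ring
    rcases h with rfl | rfl | hc | hc
    · norm_num
    · norm_num
    · rw [hmul _ hc, show (1 : ZMod (2 ^ (j + 3))) = ((1 : ℤ) : ZMod (2 ^ (j + 3))) by norm_num]
      rw [ZMod.intCast_eq_intCast_iff, Int.modEq_iff_dvd]
      refine ⟨-(2 ^ (j + 1) + 1), ?_⟩
      push_cast
      ring
    · rw [hmul _ hc, show (1 : ZMod (2 ^ (j + 3))) = ((1 : ℤ) : ZMod (2 ^ (j + 3))) by norm_num]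
      rw [ZMod.intCast_eq_intCast_iff, Int.modEq_iff_dvd]
      refine ⟨-(2 ^ (j + 1) - 1), ?_⟩
      push_cast
      ring

lemma Pc_two_pp {k : ℕ} (hk : 3 ≤ k) : Pc (2 ^ k) = 4 := by
  obtain ⟨j, rfl⟩ : ∃ j, k = j + 3 := ⟨k - 3, by omega⟩
  haveI : NeZero (2 ^ (j + 3)) := ⟨pow_ne_zero _ two_ne_zero⟩
  have hk1 : j + 3 - 1 = j + 2 := rfl
  have hj1 : (1 : ℤ) ≤ 2 ^ j := by exact_mod_cast Nat.one_le_two_pow (n := j)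
  have e2 : (2 : ℤ) ^ (j + 2) = 4 * 2 ^ j := by ring
  have e3 : (2 : ℤ) ^ (j + 3) = 8 * 2 ^ j := by ring
  have hcast : ((2 ^ (j + 3) : ℕ) : ℤ) = 8 * 2 ^ j := by push_cast; ring
  rw [Pc, Nat.card_congr (Equiv.subtypeEquivRight (fun a => sq_eq_one_two_pp hk a)), hk1]
  rw [show (-1 : ZMod (2 ^ (j + 3))) = ((-1 : ℤ) : ZMod (2 ^ (j + 3))) by norm_num,
    show (1 : ZMod (2 ^ (j + 3))) = ((1 : ℤ) : ZMod (2 ^ (j + 3))) by norm_num]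
  refine card_subtype_quad ?_ ?_ ?_ ?_ ?_ ?_
  · exact (intCast_ne_intCast _ (by norm_num) (by rw [hcast]; linarith)).symm
  · exact intCast_ne_intCast _ (by rw [e2]; linarith) (by rw [hcast, e2]; linarith)
  · exact intCast_ne_intCast _ (by rw [e2]; linarith) (by rw [hcast, e2]; linarith)
  · exact intCast_ne_intCast _ (by rw [e2]; linarith) (by rw [hcast, e2]; linarith)
  · exact intCast_ne_intCast _ (by rw [e2]; linarith) (by rw [hcast, e2]; linarith)
  · exact (intCast_ne_intCast _ (by norm_num) (by rw [hcast]; linarith)).symm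

lemma Pc_one : Pc 1 = 1 := by
  rw [Pc, Nat.card_eq_fintype_card]
  decide

lemma Pc_four : Pc 4 = 2 := by
  rw [Pc, Nat.card_eq_fintype_card]
  decide

lemma Pc_odd : ∀ {m : ℕ}, Odd m → Pc m = 2 ^ m.primeFactors.card := by
  intro m
  induction m using Nat.recOnPosPrimePosCoprime with
  | prime_pow p n hp hn =>
    intro hodd
    have hp' : p.Prime := hp
    have hp2 : p ≠ 2 := by
      rintro rfl
      have h2 : (2 : ℕ) ∣ 2 ^ n := dvd_pow_self 2 hn.ne'
      rw [Nat.odd_iff] at hodd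
      omega
    rw [Pc_odd_pp hp' hp2 hn.ne', Nat.primeFactors_prime_pow hn.ne' hp, Finset.card_singleton,
      pow_one]
  | zero =>
    intro h
    simp [Nat.odd_iff] at h
  | one =>
    intro _
    simp [Pc_one]
  | coprime a b ha hb hab iha ihb =>
    intro hodd
    rw [Nat.odd_mul] at hodd
    rw [Pc_mul hab, iha hodd.1, ihb hodd.2, ← pow_add, hab.primeFactors_mul,
      Finset.card_union_of_disjoint (Nat.Coprime.disjoint_primeFactors hab)]

lemma castHom_fiber {d : ℕ} (hd : 0 < d) (hdvd : (2 * d) ∣ (4 * d)) (x : ZMod (4 * d)) (c : ℤ) :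
    ZMod.castHom hdvd (ZMod (2 * d)) x = ((c : ℤ) : ZMod (2 * d)) ↔
      x = ((c : ℤ) : ZMod (4 * d)) ∨ x = ((c + 2 * d : ℤ) : ZMod (4 * d)) := by
  haveI : NeZero (2 * d) := ⟨by omega⟩
  haveI : NeZero (4 * d) := ⟨by omega⟩
  set z : ℤ := (ZMod.cast x : ℤ) with hz
  have hx : ((z : ℤ) : ZMod (4 * d)) = x := ZMod.intCast_zmod_cast x
  have hlhs : ZMod.castHom hdvd (ZMod (2 * d)) x = ((z : ℤ) : ZMod (2 * d)) := by
    rw [← hx]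
    exact map_intCast _ z
  rw [hlhs, ZMod.intCast_eq_intCast_iff, Int.modEq_iff_dvd,
    zmod_eq_intCast_iff, zmod_eq_intCast_iff, ← hz]
  have hc4 : ((4 * d : ℕ) : ℤ) = 4 * (d : ℤ) := by push_cast; ring
  have hc2 : ((2 * d : ℕ) : ℤ) = 2 * (d : ℤ) := by push_cast; ring
  rw [hc4, hc2]
  constructor
  · intro ⟨w, hw⟩
    rcases Int.even_or_odd w with ⟨u, hu⟩ | ⟨u, hu⟩
    · left
      exact ⟨-u, by rw [show z - c = -(c - z) by ring, hw, hu]; ring⟩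
    · right
      exact ⟨-u - 1, by rw [show z - (c + 2 * d) = -(c - z) - 2 * d by ring, hw, hu]; ring⟩
  · rintro (⟨u, hu⟩ | ⟨u, hu⟩)
    · exact ⟨-2 * u, by rw [show c - z = -(z - c) by ring, hu]; ring⟩
    · exact ⟨-2 * u - 1, by rw [show c - z = -(z - (c + 2 * d)) - 2 * d by ring, hu]; ring⟩

lemma card_quad_one : Nat.card {x : ZMod (4*1) // x = ((1 : ℤ) : ZMod (4*1)) ∨
    x = ((1 + 2 * (1:ℕ) : ℤ) : ZMod (4*1)) ∨ x = ((-1 : ℤ) : ZMod (4*1)) ∨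
    x = ((-1 + 2 * (1:ℕ) : ℤ) : ZMod (4*1))} = 2 := by
  rw [Nat.card_eq_fintype_card]
  decide

/-- The group of isometries of the discriminant group `A ≅ ℤ/2d` of
`⟨-2d⟩ ⊕ U⊕U ⊕ E8(-1)⊕E8(-1)` -- i.e. multiplications by units `a mod 2d`
admitting a lift `a mod 4d` with `a² ≡ 1 (mod 4d)` -- taken modulo `±id`,
is an elementary abelian 2-group of order `2^(p(d)-1)`, where `p(1) = 1` and
`p(d)` is the number of distinct primes dividing `d` for `d ≥ 2`. -/
theorem stmt0 (d : ℕ) (hd : 0 < d) (hdvd : (2 * d) ∣ (4 * d))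
    (K : Subgroup (ZMod (2 * d))ˣ)
    (hK : ∀ b, b ∈ K ↔ ∃ a : (ZMod (4 * d))ˣ, a ^ 2 = 1 ∧ ZMod.unitsMap hdvd a = b)
    (N : Subgroup K)
    (hN : ∀ x : K, x ∈ N ↔ ((x : (ZMod (2 * d))ˣ) = 1 ∨ (x : (ZMod (2 * d))ˣ) = -1)) :
    (∀ x : K ⧸ N, x * x = 1) ∧
    Nat.card (K ⧸ N) = 2 ^ ((if d = 1 then 1 else d.primeFactors.card) - 1) := by
  haveI : NeZero (2 * d) := ⟨by omega⟩
  haveI : NeZero (4 * d) := ⟨by omega⟩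
  -- the source group
  set S := torsion2 (ZMod (4 * d))ˣ with hS
  have hmemS : ∀ u : (ZMod (4 * d))ˣ, u ∈ S ↔ u * u = 1 := fun u => Iff.rfl
  have hφmem : ∀ s : S, ZMod.unitsMap hdvd ((s : (ZMod (4 * d))ˣ)) ∈ K := by
    intro s
    exact (hK _).2 ⟨s, by rw [sq]; exact s.2, rfl⟩
  let φ : S →* K :=
    MonoidHom.codRestrict ((ZMod.unitsMap hdvd).comp S.subtype) K hφmem
  let ψ : S →* K ⧸ N := (QuotientGroup.mk' N).comp φ
  have hφval : ∀ s : S, ((φ s : K) : (ZMod (2 * d))ˣ) = ZMod.unitsMap hdvd s := fun s => rfl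
  -- part 1
  have part1 : ∀ x : K ⧸ N, x * x = 1 := by
    intro x
    obtain ⟨y, rfl⟩ := QuotientGroup.mk_surjective x
    obtain ⟨a, ha, hmap⟩ := (hK y).1 y.2
    have hy : y * y = 1 := by
      apply Subtype.ext
      show (y : (ZMod (2 * d))ˣ) * y = 1
      rw [← hmap, ← map_mul, ← sq, ha, map_one]
    rw [← QuotientGroup.mk_mul, hy]
    rfl
  refine ⟨part1, ?_⟩
  -- surjectivity
  have hsurj : Function.Surjective ψ := by
    intro x
    obtain ⟨y, rfl⟩ := QuotientGroup.mk_surjective x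
    obtain ⟨a, ha, hmap⟩ := (hK y).1 y.2
    refine ⟨⟨a, ?_⟩, ?_⟩
    · rw [hmemS, ← sq]; exact ha
    · show QuotientGroup.mk' N (φ ⟨a, _⟩) = QuotientGroup.mk y
      have : φ ⟨a, by rw [hmemS, ← sq]; exact ha⟩ = y := Subtype.ext hmap
      rw [this]
      rfl
  -- cardinality relation
  have hiso := QuotientGroup.quotientKerEquivOfSurjective ψ hsurj
  have hcard : Nat.card S = Nat.card (K ⧸ N) * Nat.card ψ.ker := by
    rw [← Nat.card_congr hiso.toEquiv]
    exact Subgroup.card_eq_card_quotient_mul_card_subgroup ψ.ker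
  -- kernel characterization
  have key : ∀ x : ZMod (4 * d),
      ((ZMod.castHom hdvd (ZMod (2 * d)) x = 1 ∨ ZMod.castHom hdvd (ZMod (2 * d)) x = -1) ↔
        (x = ((1 : ℤ) : ZMod (4 * d)) ∨ x = ((1 + 2 * d : ℤ) : ZMod (4 * d)) ∨
         x = ((-1 : ℤ) : ZMod (4 * d)) ∨ x = ((-1 + 2 * d : ℤ) : ZMod (4 * d)))) := by
    intro x
    rw [show (-1 : ZMod (2 * d)) = ((-1 : ℤ) : ZMod (2 * d)) by norm_num,
      show (1 : ZMod (2 * d)) = ((1 : ℤ) : ZMod (2 * d)) by norm_num,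
      castHom_fiber hd hdvd x 1, castHom_fiber hd hdvd x (-1)]
    tauto
  have hker : ∀ s : S, (s ∈ ψ.ker ↔
      (((s : (ZMod (4 * d))ˣ) : ZMod (4 * d)) = ((1 : ℤ) : ZMod (4 * d)) ∨
       ((s : (ZMod (4 * d))ˣ) : ZMod (4 * d)) = ((1 + 2 * d : ℤ) : ZMod (4 * d)) ∨
       ((s : (ZMod (4 * d))ˣ) : ZMod (4 * d)) = ((-1 : ℤ) : ZMod (4 * d)) ∨
       ((s : (ZMod (4 * d))ˣ) : ZMod (4 * d)) = ((-1 + 2 * d : ℤ) : ZMod (4 * d)))) := by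
    intro s
    rw [MonoidHom.mem_ker]
    show QuotientGroup.mk' N (φ s) = 1 ↔ _
    rw [QuotientGroup.mk'_apply, QuotientGroup.eq_one_iff (φ s)]
    rw [hN (φ s), hφval s, ← key]
    constructor
    · rintro (h | h)
      · left; exact congrArg Units.val h
      · right
        have := congrArg Units.val h
        rw [Units.val_neg, Units.val_one] at this; exact this
    · rintro (h | h)
      · left; exact Units.ext h
      · right
        apply Units.ext
        rw [Units.val_neg, Units.val_one]; exact h
  -- the squares of the four special elements are 1
  have hQsq : ∀ x : ZMod (4 * d),
      (x = ((1 : ℤ) : ZMod (4 * d)) ∨ x = ((1 + 2 * d : ℤ) : ZMod (4 * d)) ∨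
       x = ((-1 : ℤ) : ZMod (4 * d)) ∨ x = ((-1 + 2 * d : ℤ) : ZMod (4 * d))) → x * x = 1 := by
    rintro x (rfl | rfl | rfl | rfl)
    · norm_num
    · rw [show ((1 + 2 * d : ℤ) : ZMod (4 * d)) * ((1 + 2 * d : ℤ) : ZMod (4 * d)) =
        (((1 + 2 * d) * (1 + 2 * d) : ℤ) : ZMod (4 * d)) by push_cast; ring,
        show (1 : ZMod (4 * d)) = ((1 : ℤ) : ZMod (4 * d)) by norm_num,
        ZMod.intCast_eq_intCast_iff, Int.modEq_iff_dvd]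
      refine ⟨-(1 + d), ?_⟩
      push_cast
      ring
    · norm_num
    · rw [show ((-1 + 2 * d : ℤ) : ZMod (4 * d)) * ((-1 + 2 * d : ℤ) : ZMod (4 * d)) =
        (((-1 + 2 * d) * (-1 + 2 * d) : ℤ) : ZMod (4 * d)) by push_cast; ring,
        show (1 : ZMod (4 * d)) = ((1 : ℤ) : ZMod (4 * d)) by norm_num,
        ZMod.intCast_eq_intCast_iff, Int.modEq_iff_dvd]
      refine ⟨1 - d, ?_⟩
      push_cast
      ring
  -- the kernel is in bijection with the four-element (or two-element) set
  have hker_card : Nat.card ψ.ker =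
      Nat.card {x : ZMod (4 * d) // x = ((1 : ℤ) : ZMod (4 * d)) ∨
        x = ((1 + 2 * d : ℤ) : ZMod (4 * d)) ∨ x = ((-1 : ℤ) : ZMod (4 * d)) ∨
        x = ((-1 + 2 * d : ℤ) : ZMod (4 * d))} := by
    apply Nat.card_eq_of_bijective
      (fun k => (⟨(((k.1 : (ZMod (4 * d))ˣ) : ZMod (4 * d))), (hker k.1).1 k.2⟩ :
        {x : ZMod (4 * d) // x = ((1 : ℤ) : ZMod (4 * d)) ∨
          x = ((1 + 2 * d : ℤ) : ZMod (4 * d)) ∨ x = ((-1 : ℤ) : ZMod (4 * d)) ∨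
          x = ((-1 + 2 * d : ℤ) : ZMod (4 * d))}))
    constructor
    · intro k1 k2 h
      apply Subtype.ext
      apply Subtype.ext
      apply Units.ext
      exact congrArg Subtype.val h
    · rintro ⟨x, hx⟩
      have hxx : x * x = 1 := hQsq x hx
      refine ⟨⟨⟨Units.mkOfMulEqOne x x hxx, ?_⟩, ?_⟩, rfl⟩
      · rw [hmemS]
        exact Units.ext hxx
      · exact (hker _).2 hx
  -- final counting
  have hc4 : ((4 * d : ℕ) : ℤ) = 4 * (d : ℤ) := by push_cast; ring
  have hPS : Nat.card S = Pc (4 * d) := card_torsion2 _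
  rw [hPS, hker_card] at hcard
  rcases eq_or_ne d 1 with rfl | hd1
  · have hker2 := card_quad_one
    have hP : Pc (4 * 1) = 2 := Pc_four
    rw [hker2, hP] at hcard
    have hq : Nat.card (K ⧸ N) = 1 := by omega
    simpa using hq
  · have hd2 : 2 ≤ d := by omega
    have hD : (2 : ℤ) ≤ (d : ℤ) := by exact_mod_cast hd2
    have hker4 : Nat.card {x : ZMod (4 * d) // x = ((1 : ℤ) : ZMod (4 * d)) ∨
        x = ((1 + 2 * d : ℤ) : ZMod (4 * d)) ∨ x = ((-1 : ℤ) : ZMod (4 * d)) ∨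
        x = ((-1 + 2 * d : ℤ) : ZMod (4 * d))} = 4 := by
      refine card_subtype_quad ?_ ?_ ?_ ?_ ?_ ?_
      · exact intCast_ne_intCast _ (by linarith) (by rw [hc4]; linarith)
      · exact (intCast_ne_intCast _ (by norm_num) (by rw [hc4]; linarith)).symm
      · exact intCast_ne_intCast _ (by linarith) (by rw [hc4]; linarith)
      · exact (intCast_ne_intCast _ (by linarith) (by rw [hc4]; linarith)).symm
      · exact (intCast_ne_intCast _ (by norm_num) (by rw [hc4]; linarith)).symm
      · exact intCast_ne_intCast _ (by linarith) (by rw [hc4]; linarith)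
    rw [hker4] at hcard
    have hqeq : ∀ X : ℕ, Pc (4 * d) = 4 * X → Nat.card (K ⧸ N) = X := by
      intro X hX
      omega
    rw [if_neg hd1]
    rcases Nat.even_or_odd d with hev | hod
    · set e := d.factorization 2 with he
      have hd2d : (2 : ℕ) ∣ d := hev.two_dvd
      have he1 : 1 ≤ e := Nat.Prime.factorization_pos_of_dvd Nat.prime_two hd.ne' hd2d
      set m := d / 2 ^ e with hm
      have hdm : 2 ^ e * m = d := Nat.ordProj_mul_ordCompl_eq_self d 2
      have hmnd : ¬ (2 : ℕ) ∣ m := Nat.not_dvd_ordCompl Nat.prime_two hd.ne'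
      have hmodd : Odd m := Nat.odd_iff.mpr (by omega)
      have hcop2 : Nat.Coprime 2 m := (Nat.prime_two.coprime_iff_not_dvd).mpr hmnd
      have h4d : 4 * d = 2 ^ (e + 2) * m := by rw [← hdm]; ring
      have hPc : Pc (4 * d) = 4 * 2 ^ m.primeFactors.card := by
        rw [h4d, Pc_mul (hcop2.pow_left _), Pc_two_pp (by omega), Pc_odd hmodd]
      have h2nm : 2 ∉ m.primeFactors := by
        intro hmem
        exact hmnd (Nat.dvd_of_mem_primeFactors hmem)
      have hpf : d.primeFactors.card = m.primeFactors.card + 1 := by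
        rw [← hdm, (hcop2.pow_left e).primeFactors_mul,
          Nat.primeFactors_prime_pow (by omega) Nat.prime_two,
          Finset.card_union_of_disjoint (by simpa using h2nm), Finset.card_singleton]
        omega
      rw [hpf, Nat.add_sub_cancel]
      exact hqeq _ hPc
    · have hc2 : Nat.Coprime 2 d := (Nat.prime_two.coprime_iff_not_dvd).mpr
        (by rw [Nat.odd_iff] at hod; omega)
      have hcop : Nat.Coprime 4 d := by
        have h := hc2.pow_left 2
        norm_num at h
        exact h
      have hPc : Pc (4 * d) = 2 * 2 ^ d.primeFactors.card := by
        rw [Pc_mul hcop, Pc_four, Pc_odd hod]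
      obtain ⟨t, ht⟩ : ∃ t, d.primeFactors.card = t + 1 := by
        have hne : d.primeFactors.Nonempty := Nat.nonempty_primeFactors.mpr (by omega)
        exact ⟨d.primeFactors.card - 1, by have := hne.card_pos; omega⟩
      have hPc' : Pc (4 * d) = 4 * 2 ^ t := by rw [hPc, ht]; ring
      rw [ht, Nat.add_sub_cancel]
      exact hqeq _ hPc'
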